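/- Let ∼ be an equivalence relation on a finite set Y, let C be a channel from a finite set X to Y, let π be a prior on X, and let Obs₁ : Y → Z₁ and Obs₂ : Y → Z₂ be two deterministic ∼-observers. Then the observed min-entropy leakage coincides: L(π, C·Obs₁) = L(π, C·Obs₂); equivalently, the posterior vulnerabilities satisfy V(π, C·Obs₁) = V(π, C·Obs₂). -/

import Mathlib

open scoped Classical BigOperators

noncomputable section

/-- A (row-stochastic) channel matrix. -/
def IsChannel {X Y : Type*} [Fintype Y] (C : X → Y → ℝ) : Prop :=
  (∀ x y, 0 ≤ C x y) ∧ ∀ x, ∑ y, C x y = 1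

/-- A prior (probability distribution). -/
def IsPrior {X : Type*} [Fintype X] (π : X → ℝ) : Prop :=
  (∀ x, 0 ≤ π x) ∧ ∑ x, π x = 1

/-- Cascade composition of channels (matrix product). -/
def cascade {X Y Z : Type*} [Fintype Y] (C : X → Y → ℝ) (D : Y → Z → ℝ) : X → Z → ℝ :=
  fun x z => ∑ y, C x y * D y z

/-- Mutual information (base-2), with `0`-probability terms taken to be `0`. -/
def MI {X Y : Type*} [Fintype X] [Fintype Y] (π : X → ℝ) (C : X → Y → ℝ) : ℝ :=
  ∑ x, ∑ y, if π x * C x y = 0 then 0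
    else π x * C x y * Real.logb 2 (C x y / ∑ x', π x' * C x' y)

/-- Prior vulnerability. -/
def Vprior {X : Type*} [Fintype X] [Nonempty X] (π : X → ℝ) : ℝ :=
  Finset.univ.sup' Finset.univ_nonempty π

/-- Posterior vulnerability. -/
def Vpost {X Y : Type*} [Fintype X] [Nonempty X] [Fintype Y]
    (π : X → ℝ) (C : X → Y → ℝ) : ℝ :=
  ∑ y, Finset.univ.sup' Finset.univ_nonempty (fun x => π x * C x y)

/-- Min-entropy leakage. -/
def MEL {X Y : Type*} [Fintype X] [Nonempty X] [Fintype Y]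
    (π : X → ℝ) (C : X → Y → ℝ) : ℝ :=
  Real.logb 2 (Vpost π C) - Real.logb 2 (Vprior π)

/-- Min-capacity: supremum of min-entropy leakage over all priors. -/
def MinCap {X Y : Type*} [Fintype X] [Nonempty X] [Fintype Y] (C : X → Y → ℝ) : ℝ :=
  sSup {l : ℝ | ∃ π : X → ℝ, IsPrior π ∧ l = MEL π C}

/-- A deterministic observer: every matrix entry is `0` or `1`. -/
def IsDeterministic {Y Z : Type*} (Obs : Y → Z → ℝ) : Prop :=
  ∀ y z, Obs y z = 0 ∨ Obs y z = 1

/-- A `∼`-observer for the relation `r`. -/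
def IsSimObserver {Y Z : Type*} (r : Y → Y → Prop) (Obs : Y → Z → ℝ) : Prop :=
  ∀ y₁ y₂, r y₁ y₂ ↔ ∀ z, Obs y₁ z = Obs y₂ z

/-- Extract the underlying function of a deterministic channel. -/
lemma det_channel_fun {Y Z : Type*} [Fintype Z] (Obs : Y → Z → ℝ)
    (hO : IsChannel Obs) (hd : IsDeterministic Obs) :
    ∃ f : Y → Z, ∀ y z, Obs y z = if f y = z then 1 else 0 := by
  have hex : ∀ y, ∃ z, Obs y z = 1 := by
    intro y
    by_contra h
    push_neg at h
    have hz : ∀ z, Obs y z = 0 := fun z => (hd y z).resolve_right (h z)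
    have := hO.2 y
    simp [hz] at this
  refine ⟨fun y => (hex y).choose, ?_⟩
  intro y z
  have hf : Obs y ((hex y).choose) = 1 := (hex y).choose_spec
  by_cases hzz : (hex y).choose = z
  · subst hzz; simp [hf]
  · simp only [if_neg hzz]
    rcases hd y z with h0 | h1
    · exact h0
    · exfalso
      have hp : ({z, (hex y).choose} : Finset Z).sum (Obs y) = 2 := by
        rw [Finset.sum_pair (fun h => hzz h.symm), h1, hf]; norm_num
      have hle : ({z, (hex y).choose} : Finset Z).sum (Obs y) ≤ ∑ z', Obs y z' :=
        Finset.sum_le_sum_of_subset_of_nonneg (Finset.subset_univ _)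
          (fun _ _ _ => hO.1 y _)
      rw [hO.2 y] at hle
      linarith

/-- Restrict a sum over fibers to the image. -/
lemma sum_fib_restrict {Y Z : Type*} [Fintype Y] [Fintype Z]
    (f : Y → Z) (g : Finset Y → ℝ) (hg : g ∅ = 0) :
    ∑ z, g (Finset.univ.filter fun y => f y = z)
      = ∑ S ∈ ((Finset.univ.image f).image
          fun z => Finset.univ.filter fun y => f y = z), g S := by
  rw [Finset.sum_image]
  · refine (Finset.sum_subset (Finset.subset_univ _) ?_).symm
    intro z _ hz
    have hempty : (Finset.univ.filter fun y => f y = z) = ∅ := by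
      rw [Finset.filter_eq_empty_iff]
      intro y _ hy
      exact hz (Finset.mem_image.mpr ⟨y, Finset.mem_univ y, hy⟩)
    rw [hempty, hg]
  · intro z hz z' _ hEq
    rcases Finset.mem_image.mp hz with ⟨y, _, hy⟩
    have hymem : y ∈ Finset.univ.filter fun y => f y = z :=
      Finset.mem_filter.mpr ⟨Finset.mem_univ y, hy⟩
    rw [show (Finset.univ.filter fun y => f y = z) = Finset.univ.filter fun y => f y = z' from hEq] at hymem
    have := (Finset.mem_filter.mp hymem).2
    rw [← hy, this]

/-- Two functions with the same fibers induce the same fiber-sums. -/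
lemma sum_fib_eq {Y Z₁ Z₂ : Type*} [Fintype Y] [Fintype Z₁] [Fintype Z₂]
    (f₁ : Y → Z₁) (f₂ : Y → Z₂)
    (h : ∀ y y', f₁ y = f₁ y' ↔ f₂ y = f₂ y')
    (g : Finset Y → ℝ) (hg : g ∅ = 0) :
    ∑ z, g (Finset.univ.filter fun y => f₁ y = z)
      = ∑ z, g (Finset.univ.filter fun y => f₂ y = z) := by
  rw [sum_fib_restrict f₁ g hg, sum_fib_restrict f₂ g hg]
  have hfib : ∀ y : Y, (Finset.univ.filter fun y' => f₁ y' = f₁ y)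
      = (Finset.univ.filter fun y' => f₂ y' = f₂ y) := by
    intro y
    ext y'
    simp only [Finset.mem_filter, Finset.mem_univ, true_and]
    exact h y' y
  congr 1
  ext S
  simp only [Finset.mem_image, Finset.mem_univ, true_and, exists_exists_eq_and]
  constructor
  · rintro ⟨y, hy⟩; exact ⟨y, by rw [← hfib y]; exact hy⟩
  · rintro ⟨y, hy⟩; exact ⟨y, by rw [hfib y]; exact hy⟩

lemma vpost_cascade_det {X Y Z : Type*} [Fintype X] [Nonempty X] [Fintype Y] [Fintype Z]
    (π : X → ℝ) (C : X → Y → ℝ) (Obs : Y → Z → ℝ) (f : Y → Z)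
    (hObs : ∀ y z, Obs y z = if f y = z then 1 else 0) :
    Vpost π (cascade C Obs)
      = ∑ z, Finset.univ.sup' Finset.univ_nonempty
          (fun x => ∑ y ∈ Finset.univ.filter (fun y => f y = z), π x * C x y) := by
  unfold Vpost
  refine Finset.sum_congr rfl fun z _ => ?_
  refine Finset.sup'_congr _ rfl fun x _ => ?_
  unfold cascade
  rw [Finset.mul_sum, Finset.sum_filter]
  refine Finset.sum_congr rfl fun y _ => ?_
  rw [hObs y z]
  split_ifs <;> ring

/-- two deterministic `∼`-observers yield the same observed
min-entropy leakage and the same posterior vulnerability. -/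
theorem observed_MEL_unique_det_sim_observer
    {X Y Z₁ Z₂ : Type*} [Fintype X] [Nonempty X] [Fintype Y] [Fintype Z₁] [Fintype Z₂]
    (r : Y → Y → Prop) (hr : Equivalence r)
    (C : X → Y → ℝ) (hC : IsChannel C)
    (π : X → ℝ) (hπ : IsPrior π)
    (Obs₁ : Y → Z₁ → ℝ) (Obs₂ : Y → Z₂ → ℝ)
    (hO₁ : IsChannel Obs₁) (hO₂ : IsChannel Obs₂)
    (hd₁ : IsDeterministic Obs₁) (hd₂ : IsDeterministic Obs₂)
    (hs₁ : IsSimObserver r Obs₁) (hs₂ : IsSimObserver r Obs₂) :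
    MEL π (cascade C Obs₁) = MEL π (cascade C Obs₂) ∧
      Vpost π (cascade C Obs₁) = Vpost π (cascade C Obs₂) := by
  obtain ⟨f₁, hf₁⟩ := det_channel_fun Obs₁ hO₁ hd₁
  obtain ⟨f₂, hf₂⟩ := det_channel_fun Obs₂ hO₂ hd₂
  -- same fibers
  have hff : ∀ y y', f₁ y = f₁ y' ↔ f₂ y = f₂ y' := by
    intro y y'
    have e1 : f₁ y = f₁ y' ↔ r y y' := by
      rw [hs₁ y y']
      constructor
      · intro h z; rw [hf₁ y z, hf₁ y' z, h]
      · intro h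
        have := h (f₁ y')
        rw [hf₁ y (f₁ y'), hf₁ y' (f₁ y')] at this
        simp only [if_pos rfl] at this
        by_contra hne
        rw [if_neg hne] at this
        norm_num at this
    have e2 : f₂ y = f₂ y' ↔ r y y' := by
      rw [hs₂ y y']
      constructor
      · intro h z; rw [hf₂ y z, hf₂ y' z, h]
      · intro h
        have := h (f₂ y')
        rw [hf₂ y (f₂ y'), hf₂ y' (f₂ y')] at this
        simp only [if_pos rfl] at this
        by_contra hne
        rw [if_neg hne] at this
        norm_num at this
    rw [e1, e2]
  have hV : Vpost π (cascade C Obs₁) = Vpost π (cascade C Obs₂) := by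
    rw [vpost_cascade_det π C Obs₁ f₁ hf₁, vpost_cascade_det π C Obs₂ f₂ hf₂]
    exact sum_fib_eq f₁ f₂ hff
      (fun S => Finset.univ.sup' Finset.univ_nonempty (fun x => ∑ y ∈ S, π x * C x y))
      (by simp)
  exact ⟨by unfold MEL; rw [hV], hV⟩
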